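/- For n ≥ 2 and λ ∈ (ℝ_{>0})^n, if e, e' ∈ [0,1]^n are both equilibria with Σ_i e_i = Σ_i e'_i = s for some s ∈ (0,n), and both lie in (0,1)^n, then intersecting with any fixed λ the equilibrium point in the hyperplane Σ e_i = s is unique: e = e'. (Uniqueness of the equilibrium on each level set of the first integral.) -/

import Mathlib

open Finset Set

def IsEquilibrium (n : ℕ) [NeZero n] (lam e : Fin n → ℝ) : Prop :=
  ∀ i j : Fin n, lam i * e i * (1 - e (i + 1)) = lam j * e j * (1 - e (j + 1))

open Fin.NatCast Fin.CommRing in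
lemma key_aux (n : ℕ) [NeZero n] (lam : Fin n → ℝ) (hlam : ∀ i, 0 < lam i)
    (e e' : Fin n → ℝ)
    (he : ∀ i, e i ∈ Set.Ioo (0:ℝ) 1) (he' : ∀ i, e' i ∈ Set.Ioo (0:ℝ) 1)
    (heq : IsEquilibrium n lam e) (heq' : IsEquilibrium n lam e')
    (hsum : ∑ i, e i = ∑ i, e' i)
    (hcc : lam 0 * e 0 * (1 - e (0+1)) ≤ lam 0 * e' 0 * (1 - e' (0+1))) :
    e = e' := by
  set c := lam 0 * e 0 * (1 - e (0+1)) with hc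
  set c' := lam 0 * e' 0 * (1 - e' (0+1)) with hc'
  have hce : ∀ i, lam i * e i * (1 - e (i+1)) = c := fun i => heq i 0
  have hce' : ∀ i, lam i * e' i * (1 - e' (i+1)) = c' := fun i => heq' i 0
  -- step lemma
  have step : ∀ i : Fin n, e' i < e i → e' (i+1) < e (i+1) := by
    intro i h
    have hA : 0 < lam i * e i := mul_pos (hlam i) (he i).1
    have hB : 0 < lam i * e' i := mul_pos (hlam i) (he' i).1
    have hBA : lam i * e' i < lam i * e i :=
      mul_lt_mul_of_pos_left h (hlam i)
    have hu : 0 < 1 - e (i+1) := by linarith [(he (i+1)).2]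
    have hv : 0 < 1 - e' (i+1) := by linarith [(he' (i+1)).2]
    have h1 : lam i * e i * (1 - e (i+1)) ≤ lam i * e' i * (1 - e' (i+1)) := by
      rw [hce i, hce' i]; exact hcc
    nlinarith [mul_lt_mul_of_pos_left hBA hv]
  by_contra hne
  -- there is an index with e' i < e i
  obtain ⟨i, hi⟩ : ∃ i, e' i < e i := by
    by_contra hall
    push_neg at hall
    obtain ⟨j, hj⟩ : ∃ j, e j ≠ e' j := by
      by_contra hj; push_neg at hj; exact hne (funext hj)
    have : ∑ k, e k < ∑ k, e' k :=
      Finset.sum_lt_sum (fun k _ => hall k) ⟨j, Finset.mem_univ j, lt_of_le_of_ne (hall j) hj⟩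
    linarith
  have hstep : ∀ k : ℕ, e' (i + (k : Fin n)) < e (i + (k : Fin n)) := by
    intro k
    induction k with
    | zero => simpa using hi
    | succ k ih =>
        have := step _ ih
        have hk : ((k + 1 : ℕ) : Fin n) = (k : Fin n) + 1 := by
          push_cast; ring
        rw [hk, ← add_assoc]
        exact this
  have hall : ∀ j : Fin n, e' j < e j := by
    intro j
    have := hstep (j - i).val
    rwa [Fin.cast_val_eq_self, add_comm, sub_add_cancel] at this
  have : ∑ k, e' k < ∑ k, e k :=
    Finset.sum_lt_sum_of_nonempty Finset.univ_nonempty (fun j _ => hall j)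
  linarith

theorem stmt19 (n : ℕ) [NeZero n] (hn : 2 ≤ n) (lam : Fin n → ℝ) (hlam : ∀ i, 0 < lam i)
    (s : ℝ) (hs : s ∈ Set.Ioo (0:ℝ) (n:ℝ)) (e e' : Fin n → ℝ)
    (he : ∀ i, e i ∈ Set.Ioo (0:ℝ) 1) (he' : ∀ i, e' i ∈ Set.Ioo (0:ℝ) 1)
    (heq : IsEquilibrium n lam e) (heq' : IsEquilibrium n lam e')
    (h1 : ∑ i, e i = s) (h2 : ∑ i, e' i = s) : e = e' := by
  rcases le_total (lam 0 * e 0 * (1 - e (0+1))) (lam 0 * e' 0 * (1 - e' (0+1))) with h | h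
  · exact key_aux n lam hlam e e' he he' heq heq' (by rw [h1, h2]) h
  · exact (key_aux n lam hlam e' e he' he heq' heq (by rw [h1, h2]) h).symm
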